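/- Let θ, η > 0 be constants and let p̃, ṽ, ψ̂ : [0,∞) → ℝ be differentiable functions satisfying p̃′(t) = −θ p̃(t), ṽ′(t) = −ψ̂(t) ṽ(t), and ψ̂′(t) = η ṽ(t)² for all t ≥ 0. Then ψ̂ is nondecreasing and bounded, hence converges to a finite limit as t → ∞, and ∫₀^∞ ṽ(t)² dt < ∞. -/

import Mathlib

open Set Filter MeasureTheory intervalIntegral

/-- **Boundedness and integrability in the proof of Theorem 1.** Along the closed-loop
dynamics `p̃′ = −θ p̃`, `ṽ′ = −ψ̂ ṽ`, `ψ̂′ = η ṽ²`, the adaptive gain `ψ̂` is nondecreasing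
and bounded, hence converges to a finite limit, and `∫₀^∞ ṽ(t)² dt < ∞`. -/
theorem qabc_gain_bounded_and_v_square_integrable (θ η : ℝ) (hθ : 0 < θ) (hη : 0 < η)
    (p v ψ : ℝ → ℝ)
    (hp : ∀ t ∈ Set.Ici (0:ℝ), HasDerivWithinAt p (-θ * p t) (Set.Ici 0) t)
    (hv : ∀ t ∈ Set.Ici (0:ℝ), HasDerivWithinAt v (-(ψ t) * v t) (Set.Ici 0) t)
    (hψ : ∀ t ∈ Set.Ici (0:ℝ), HasDerivWithinAt ψ (η * (v t) ^ 2) (Set.Ici 0) t) :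
    MonotoneOn ψ (Set.Ici 0) ∧ (∃ M : ℝ, ∀ t ∈ Set.Ici (0:ℝ), ψ t ≤ M) ∧
      (∃ l : ℝ, Filter.Tendsto ψ Filter.atTop (nhds l)) ∧
      MeasureTheory.IntegrableOn (fun t => (v t) ^ 2) (Set.Ici 0) := by
  have hψc : ContinuousOn ψ (Set.Ici 0) := fun t ht => (hψ t ht).continuousWithinAt
  have hvc : ContinuousOn v (Set.Ici 0) := fun t ht => (hv t ht).continuousWithinAt
  -- monotonicity of ψ
  have hmono : MonotoneOn ψ (Set.Ici 0) := by
    apply monotoneOn_of_hasDerivWithinAt_nonneg (convex_Ici 0) hψc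
      (f' := fun t => η * (v t) ^ 2)
    · intro x hx
      rw [interior_Ici] at hx ⊢
      exact (hψ x (le_of_lt (Set.mem_Ioi.mp hx))).mono Set.Ioi_subset_Ici_self
    · intro x _
      positivity
  -- Lyapunov function W = η v² + (ψ - 1)²
  set W : ℝ → ℝ := fun t => η * (v t) ^ 2 + (ψ t - 1) ^ 2 with hW
  have hWd : ∀ t ∈ Set.Ici (0:ℝ),
      HasDerivWithinAt W (-2 * η * (v t) ^ 2) (Set.Ici 0) t := by
    intro t ht
    have h1 := (((hv t ht).pow 2).const_mul η).add (((hψ t ht).sub_const 1).pow 2)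
    exact h1.congr_deriv (by norm_num; ring)
  have hWanti : AntitoneOn W (Set.Ici 0) := by
    apply antitoneOn_of_hasDerivWithinAt_nonpos (convex_Ici 0)
      (f' := fun t => -2 * η * (v t) ^ 2)
      (fun t ht => (hWd t ht).continuousWithinAt)
    · intro x hx
      rw [interior_Ici] at hx ⊢
      exact (hWd x (le_of_lt (Set.mem_Ioi.mp hx))).mono Set.Ioi_subset_Ici_self
    · intro x _
      nlinarith [sq_nonneg (v x)]
  -- boundedness of ψ
  set M : ℝ := 1 + Real.sqrt (W 0) with hM
  have hbound : ∀ t ∈ Set.Ici (0:ℝ), ψ t ≤ M := by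
    intro t ht
    have hWle : W t ≤ W 0 := hWanti (le_refl (0:ℝ)) ht ht
    have h1 : (ψ t - 1) ^ 2 ≤ W 0 := by
      have : 0 ≤ η * (v t) ^ 2 := by positivity
      simp only [hW] at hWle ⊢; linarith
    have h2 : ψ t - 1 ≤ Real.sqrt (W 0) := by
      calc ψ t - 1 ≤ |ψ t - 1| := le_abs_self _
        _ = Real.sqrt ((ψ t - 1) ^ 2) := (Real.sqrt_sq_eq_abs _).symm
        _ ≤ Real.sqrt (W 0) := Real.sqrt_le_sqrt h1
    linarith
  refine ⟨hmono, ⟨M, hbound⟩, ?_, ?_⟩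
  -- convergence of ψ
  · have hne : (ψ '' Set.Ici 0).Nonempty := ⟨ψ 0, 0, Set.self_mem_Ici, rfl⟩
    have hbdd : BddAbove (ψ '' Set.Ici 0) := by
      refine ⟨M, ?_⟩
      rintro y ⟨x, hx, rfl⟩
      exact hbound x hx
    refine ⟨sSup (ψ '' Set.Ici 0), ?_⟩
    rw [Metric.tendsto_atTop]
    intro ε hε
    obtain ⟨y, ⟨x, hx, rfl⟩, hy⟩ :=
      exists_lt_of_lt_csSup hne (sub_lt_self (sSup (ψ '' Set.Ici 0)) hε)
    refine ⟨x, fun t ht => ?_⟩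
    have ht0 : t ∈ Set.Ici (0:ℝ) := le_trans hx ht
    have h1 : ψ x ≤ ψ t := hmono hx ht0 ht
    have h2 : ψ t ≤ sSup (ψ '' Set.Ici 0) := le_csSup hbdd ⟨t, ht0, rfl⟩
    rw [Real.dist_eq, abs_lt]
    constructor <;> linarith
  -- integrability of v²
  · have key : ∀ T : ℝ, 0 ≤ T → (∫ y in (0:ℝ)..T, η * (v y) ^ 2) = ψ T - ψ 0 := by
      intro T hT
      apply integral_eq_sub_of_hasDeriv_right_of_le hT
        (hψc.mono (Set.Icc_subset_Ici_self))
      · intro x hx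
        exact (hψ x (le_of_lt hx.1)).mono (fun y hy => le_of_lt (lt_trans hx.1 hy))
      · apply ContinuousOn.intervalIntegrable_of_Icc hT
        exact (continuousOn_const.mul ((hvc.mono Set.Icc_subset_Ici_self).pow 2))
    have hIoc : ∀ T : ℝ, IntegrableOn (fun t => (v t) ^ 2) (Set.Ioc (0:ℝ) T) := by
      intro T
      rcases le_or_gt T 0 with h | h
      · rw [Set.Ioc_eq_empty (by exact not_lt.mpr h)]
        exact integrableOn_empty
      · exact (((hvc.mono Set.Icc_subset_Ici_self).pow 2).integrableOn_Icc
          (a := 0) (b := T)).mono_set Set.Ioc_subset_Icc_self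
    have hInt : IntegrableOn (fun t => (v t) ^ 2) (Set.Ioi (0:ℝ)) := by
      apply integrableOn_Ioi_of_intervalIntegral_norm_bounded
        ((M - ψ 0) / η) 0 hIoc (tendsto_id (α := ℝ))
      filter_upwards [eventually_ge_atTop (0:ℝ)] with T hT
      have heq : (∫ x in (0:ℝ)..T, ‖(v x) ^ 2‖) = ∫ x in (0:ℝ)..T, (v x) ^ 2 := by
        apply intervalIntegral.integral_congr
        intro x _
        simp [Real.norm_eq_abs, abs_of_nonneg (sq_nonneg (v x))]
      have h2 : (∫ x in (0:ℝ)..T, η * (v x) ^ 2) = η * ∫ x in (0:ℝ)..T, (v x) ^ 2 := by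
        simp [intervalIntegral.integral_const_mul]
      have h3 := key T hT
      rw [h2] at h3
      have h4 : ψ T ≤ M := hbound T hT
      rw [heq, le_div_iff₀ hη]
      linarith
    exact Iff.mpr integrableOn_Ici_iff_integrableOn_Ioi hInt
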